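/- In the abstract framework, assume additionally that ι and C are injective and that the de Rham complex is exact at V, i.e. every v ∈ V with D v = 0 equals C q for some q ∈ Q. Then: (i) if (λ,u) ∈ ℝ × V with u ≠ 0 and λ ≠ 0 satisfies ⟨D u, D v⟩_W = λ ⟨ι u, ι v⟩_H for all v ∈ V, then ⟨ι u, ι (C q)⟩_H = 0 for all q ∈ Q, so (λ,u) solves the mixed eigenproblem with Lagrange multiplier p = 0; (ii) conversely, if (λ,u) ∈ ℝ × V with u ≠ 0 satisfies, for some p ∈ Q, both ⟨D u, D v⟩_W + ⟨ι v, ι (C p)⟩_H = λ ⟨ι u, ι v⟩_H for all v ∈ V and ⟨ι u, ι (C q)⟩_H = 0 for all q ∈ Q, then p = 0, λ ≠ 0, and ⟨D u, D v⟩_W = λ ⟨ι u, ι v⟩_H for all v ∈ V. -/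

import Mathlib

/-- Abstract form of Proposition 3.1 of the paper: equivalence of the
variational eigenproblem and its mixed formulation. -/
theorem continuous_mixed_equivalence
    {H W V Q : Type*}
    [NormedAddCommGroup H] [InnerProductSpace ℝ H] [CompleteSpace H]
    [NormedAddCommGroup W] [InnerProductSpace ℝ W] [CompleteSpace W]
    [NormedAddCommGroup V] [InnerProductSpace ℝ V] [CompleteSpace V]
    [NormedAddCommGroup Q] [InnerProductSpace ℝ Q] [CompleteSpace Q]
    (ι : V →L[ℝ] H) (D : V →L[ℝ] W) (C : Q →L[ℝ] V)
    (hnorm : ∀ v : V, ‖v‖ ^ 2 = ‖ι v‖ ^ 2 + ‖D v‖ ^ 2)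
    (hDC : ∀ q : Q, D (C q) = 0)
    (hι : Function.Injective ι) (hC : Function.Injective C)
    (hexact : ∀ v : V, D v = 0 → ∃ q : Q, C q = v) :
    -- (i)
    ((∀ (lam : ℝ) (u : V), u ≠ 0 → lam ≠ 0 →
        (∀ v : V, (inner ℝ (D u) (D v) : ℝ) = lam * (inner ℝ (ι u) (ι v) : ℝ)) →
        ∀ q : Q, (inner ℝ (ι u) (ι (C q)) : ℝ) = 0)
      ∧
    -- (ii)
      (∀ (lam : ℝ) (u : V) (p : Q), u ≠ 0 →
        (∀ v : V, (inner ℝ (D u) (D v) : ℝ) + (inner ℝ (ι v) (ι (C p)) : ℝ)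
            = lam * (inner ℝ (ι u) (ι v) : ℝ)) →
        (∀ q : Q, (inner ℝ (ι u) (ι (C q)) : ℝ) = 0) →
        p = 0 ∧ lam ≠ 0 ∧
          ∀ v : V, (inner ℝ (D u) (D v) : ℝ) = lam * (inner ℝ (ι u) (ι v) : ℝ))) := by
  constructor
  · intro lam u hu hlam heq q
    have h := heq (C q)
    rw [hDC q, inner_zero_right] at h
    exact (mul_eq_zero.mp h.symm).resolve_left hlam
  · intro lam u p hu heq horth
    have hp : p = 0 := by
      have h := heq (C p)
      rw [hDC p, inner_zero_right, horth p, zero_add, mul_zero] at h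
      have : ι (C p) = 0 := by
        rwa [← inner_self_eq_zero (𝕜 := ℝ)]
      apply hC
      rw [map_zero]
      exact hι (by rwa [map_zero])
    subst hp
    have heq' : ∀ v : V, (inner ℝ (D u) (D v) : ℝ) = lam * (inner ℝ (ι u) (ι v) : ℝ) := by
      intro v
      have h := heq v
      rwa [map_zero, map_zero, inner_zero_right, add_zero] at h
    refine ⟨rfl, ?_, heq'⟩
    intro hlam
    subst hlam
    have hDu : D u = 0 := by
      have h := heq' u
      rw [zero_mul] at h
      rwa [← inner_self_eq_zero (𝕜 := ℝ)]
    obtain ⟨q, hq⟩ := hexact u hDu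
    have h := horth q
    rw [hq] at h
    have : ι u = 0 := by rwa [← inner_self_eq_zero (𝕜 := ℝ)]
    exact hu (hι (by rwa [map_zero]))
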